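/- arXiv:1403.7587 — 2 statements merged into one kernel-verified Lean document; each statement's English description precedes it below -/
import Mathlib

section
/- Let G be a locally compact unimodular group with Haar measure μ acting on a set X, and let G act on W := X × ℝ by g • (x,t) := (g • x, t). Let ε > 0 and let α, β : ℝ → [0,1] satisfy α(t)² + β(t)² = 1 for all t and α(t) = 0 for all t ≤ ε/3. Let η : X → [0,∞) satisfy ∫_G η(g • x)² dμ(g) = 1 for every x, and let χ₁ : W → [0,∞) satisfy ∫_G χ₁(g • w)² dμ(g) = 1 for every w ∈ W; assume moreover that for each w = (x,t) the functions g ↦ χ₁(g • w)², g ↦ η(g • x)² and g ↦ χ₁(g • w)·η(g • x) are μ-integrable. Define χ₂(x,t) := α(t)·χ₁(x,t) + β(t)·η(x), ψ(x,t) := 2·α(t)·β(t)·χ₁(x,t)·η(x), and χ(w) := χ₂(w) / (1 + ∫_G ψ(g • w) dμ(g))^{1/2}. Then: (i) ∫_G χ(g • w)² dμ(g) = 1 for every w ∈ W, and (ii) χ(x,t) = η(x) whenever t ≤ ε/3. -/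
open MeasureTheory

/-- A cutoff function `η` on `X` extends to a cutoff function `χ` on `W = X × ℝ`
(with `G` acting on the first factor) which equals `η` for `t ≤ ε/3`:
setting `χ₂(x,t) = α(t)χ₁(x,t) + β(t)η(x)`, `ψ(x,t) = 2α(t)β(t)χ₁(x,t)η(x)` and
`χ = χ₂ / (1 + ∫_G ψ(g•w) dμ(g))^{1/2}`, the function `χ` satisfies the normalization
`∫_G χ(g•w)² dμ(g) = 1` and `χ(x,t) = η(x)` for `t ≤ ε/3`. -/
theorem cutoff_extension_cobordism
    {G X : Type*} [Group G] [TopologicalSpace G] [IsTopologicalGroup G]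
    [LocallyCompactSpace G] [MeasurableSpace G] [BorelSpace G]
    (μ : Measure G) [μ.IsHaarMeasure] [μ.IsMulRightInvariant]
    [MulAction G X]
    (ε : ℝ) (hε : 0 < ε)
    (α β : ℝ → ℝ)
    (hα01 : ∀ t, α t ∈ Set.Icc (0 : ℝ) 1)
    (hβ01 : ∀ t, β t ∈ Set.Icc (0 : ℝ) 1)
    (hαβ : ∀ t, (α t) ^ 2 + (β t) ^ 2 = 1)
    (hα0 : ∀ t ≤ ε / 3, α t = 0)
    (η : X → ℝ) (hη0 : ∀ x, 0 ≤ η x)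
    (hηnorm : ∀ x : X, ∫ g, (η (g • x)) ^ 2 ∂μ = 1)
    (χ₁ : X × ℝ → ℝ) (hχ₁0 : ∀ w, 0 ≤ χ₁ w)
    (hχ₁norm : ∀ (x : X) (t : ℝ), ∫ g, (χ₁ (g • x, t)) ^ 2 ∂μ = 1)
    (hint1 : ∀ (x : X) (t : ℝ), Integrable (fun g : G => (χ₁ (g • x, t)) ^ 2) μ)
    (hint2 : ∀ x : X, Integrable (fun g : G => (η (g • x)) ^ 2) μ)
    (hint3 : ∀ (x : X) (t : ℝ), Integrable (fun g : G => χ₁ (g • x, t) * η (g • x)) μ)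
    (χ₂ ψ χ : X × ℝ → ℝ)
    (hχ₂def : ∀ (x : X) (t : ℝ), χ₂ (x, t) = α t * χ₁ (x, t) + β t * η x)
    (hψdef : ∀ (x : X) (t : ℝ), ψ (x, t) = 2 * α t * β t * χ₁ (x, t) * η x)
    (hχdef : ∀ (x : X) (t : ℝ),
      χ (x, t) = χ₂ (x, t) / Real.sqrt (1 + ∫ g, ψ (g • x, t) ∂μ)) :
    (∀ (x : X) (t : ℝ), ∫ g, (χ (g • x, t)) ^ 2 ∂μ = 1) ∧
    (∀ (x : X) (t : ℝ), t ≤ ε / 3 → χ (x, t) = η x) := by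
  -- nonnegativity of the correction integral
  have hI0 : ∀ (x : X) (t : ℝ), 0 ≤ ∫ g, ψ (g • x, t) ∂μ := by
    intro x t
    apply integral_nonneg
    intro g
    show (0:ℝ) ≤ ψ (g • x, t)
    rw [hψdef]
    exact mul_nonneg (mul_nonneg (mul_nonneg (mul_nonneg (by norm_num)
      (hα01 t).1) (hβ01 t).1) (hχ₁0 _)) (hη0 _)
  have hIpos : ∀ (x : X) (t : ℝ), 0 < 1 + ∫ g, ψ (g • x, t) ∂μ := by
    intro x t; linarith [hI0 x t]
  -- the correction integral is G-invariant (right invariance / unimodularity)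
  have hIconst : ∀ (x : X) (t : ℝ) (g : G),
      (∫ h, ψ (h • g • x, t) ∂μ) = ∫ h, ψ (h • x, t) ∂μ := by
    intro x t g
    simp_rw [← mul_smul]
    exact integral_mul_right_eq_self (fun h => ψ (h • x, t)) g
  -- value of the correction integral
  have hIval : ∀ (x : X) (t : ℝ),
      (∫ g, ψ (g • x, t) ∂μ)
        = 2 * α t * β t * ∫ g, χ₁ (g • x, t) * η (g • x) ∂μ := by
    intro x t
    rw [← integral_const_mul]
    congr 1; funext g
    rw [hψdef]; ring
  -- the key norm computation for χ₂
  have hχ₂norm : ∀ (x : X) (t : ℝ),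
      (∫ g, (χ₂ (g • x, t)) ^ 2 ∂μ) = 1 + ∫ g, ψ (g • x, t) ∂μ := by
    intro x t
    have h1 : (fun g : G => (χ₂ (g • x, t)) ^ 2)
        = fun g : G => (α t) ^ 2 * (χ₁ (g • x, t)) ^ 2
            + (2 * α t * β t * (χ₁ (g • x, t) * η (g • x))
              + (β t) ^ 2 * (η (g • x)) ^ 2) := by
      funext g; rw [hχ₂def]; ring
    have i2 : Integrable (fun g : G =>
        2 * α t * β t * (χ₁ (g • x, t) * η (g • x))) μ := (hint3 x t).const_mul _
    have i3 : Integrable (fun g : G => (β t) ^ 2 * (η (g • x)) ^ 2) μ :=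
      (hint2 x).const_mul _
    have i23 : Integrable (fun g : G =>
        2 * α t * β t * (χ₁ (g • x, t) * η (g • x))
          + (β t) ^ 2 * (η (g • x)) ^ 2) μ := i2.add i3
    rw [h1, integral_add ((hint1 x t).const_mul _) i23,
      integral_add i2 i3,
      integral_const_mul, integral_const_mul, integral_const_mul,
      hχ₁norm, hηnorm, hIval]
    have := hαβ t
    ring_nf
    linarith
  constructor
  · intro x t
    have hcalc : (fun g : G => (χ (g • x, t)) ^ 2)
        = fun g : G => (χ₂ (g • x, t)) ^ 2 / (1 + ∫ g, ψ (g • x, t) ∂μ) := by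
      funext g
      rw [hχdef, hIconst, div_pow, Real.sq_sqrt (hIpos x t).le]
    rw [hcalc, integral_div, hχ₂norm]
    exact div_self (hIpos x t).ne'
  · intro x t ht
    have hβ1 : β t = 1 := by
      have h := hαβ t
      rw [hα0 t ht] at h
      nlinarith [(hβ01 t).1, (hβ01 t).2]
    have hψ0 : ∀ g : G, ψ (g • x, t) = 0 := by
      intro g; rw [hψdef, hα0 t ht]; ring
    rw [hχdef]
    simp only [hψ0, integral_zero, add_zero, Real.sqrt_one, div_one,
      hχ₂def, hα0 t ht, hβ1, zero_mul, one_mul, zero_add]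
end

section
/- Let G be a topological group acting continuously on a topological space X, and let G act on W := X × ℝ by g • (x,t) := (g • x, t). Assume every G-orbit in X is a closed subset of X. Let α, β : ℝ → ℝ, let η : X → ℝ and χ₁ : W → ℝ be continuous functions such that the closed support of χ₁ intersects every G-orbit in W in a compact set and the closed support of η intersects every G-orbit in X in a compact set. Then the closed support of the function χ₂(x,t) := α(t)·χ₁(x,t) + β(t)·η(x) intersects every G-orbit in W in a compact set. -/
/-- If the supports of `χ₁ : X × ℝ → ℝ` and `η : X → ℝ` intersect every `G`-orbit
(`G` acting on `X × ℝ` through the first factor) in a compact set, then so does the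
support of `χ₂(x,t) = α(t)·χ₁(x,t) + β(t)·η(x)`. -/
theorem support_interpolation_orbit_compact
    {G X : Type*} [Group G] [TopologicalSpace G] [IsTopologicalGroup G]
    [TopologicalSpace X] [MulAction G X] [ContinuousSMul G X]
    (horb : ∀ x : X, IsClosed (MulAction.orbit G x))
    (α β : ℝ → ℝ) (η : X → ℝ) (χ₁ : X × ℝ → ℝ)
    (hηcont : Continuous η) (hχ₁cont : Continuous χ₁)
    (hχ₁supp : ∀ (x : X) (t : ℝ),
      IsCompact (tsupport χ₁ ∩ (MulAction.orbit G x ×ˢ ({t} : Set ℝ))))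
    (hηsupp : ∀ x : X, IsCompact (tsupport η ∩ MulAction.orbit G x)) :
    ∀ (x : X) (t : ℝ),
      IsCompact (tsupport (fun p : X × ℝ => α p.2 * χ₁ p + β p.2 * η p.1) ∩
        (MulAction.orbit G x ×ˢ ({t} : Set ℝ))) := by
  intro x t
  set χ₂ : X × ℝ → ℝ := fun p => α p.2 * χ₁ p + β p.2 * η p.1 with hχ₂
  have hsub : tsupport χ₂ ⊆ tsupport χ₁ ∪ (tsupport η ×ˢ (Set.univ : Set ℝ)) := by
    have h1 : Function.support χ₂ ⊆
        tsupport χ₁ ∪ (tsupport η ×ˢ (Set.univ : Set ℝ)) := by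
      intro p hp
      by_contra hcon
      rw [Set.mem_union, not_or] at hcon
      have h1 : χ₁ p = 0 :=
        image_eq_zero_of_notMem_tsupport hcon.1
      have h2 : η p.1 = 0 := by
        apply image_eq_zero_of_notMem_tsupport
        intro hmem
        exact hcon.2 ⟨hmem, Set.mem_univ _⟩
      apply hp
      simp [hχ₂, h1, h2]
    have hcl : IsClosed (tsupport χ₁ ∪ (tsupport η ×ˢ (Set.univ : Set ℝ))) :=
      (isClosed_tsupport χ₁).union ((isClosed_tsupport η).prod isClosed_univ)
    exact closure_minimal h1 hcl
  apply IsCompact.of_isClosed_subset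
    (((hχ₁supp x t).union (((hηsupp x).prod isCompact_singleton).image
      (continuous_fst.prodMk continuous_snd))))
  · exact (isClosed_tsupport χ₂).inter (((horb x).prod isClosed_singleton))
  · intro p hp
    rcases hsub hp.1 with h | h
    · exact Or.inl ⟨h, hp.2⟩
    · refine Or.inr ?_
      refine ⟨p, ⟨⟨h.1, hp.2.1⟩, hp.2.2⟩, ?_⟩
      exact Prod.ext rfl rfl
end
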